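/- For any positive integers m and q, there exist infinitely many even integers k for which the Poincaré series P_{m,k,q} is not identically zero on ℍ. -/

import Mathlib

open Complex Filter MeasureTheory
open scoped Real Topology

noncomputable section

namespace EP

/-- `SL_2(ℤ)`. -/
abbrev SL2Z := Matrix.SpecialLinearGroup (Fin 2) ℤ

/-- Elements of `Γ_0(q)`: matrices in `SL_2(ℤ)` whose lower-left entry is divisible by `q`. -/
def Level (q : ℕ) := {M : SL2Z // (q : ℤ) ∣ M.1 1 0}

/-- The relation identifying `M` and `N` iff they lie in the same coset of
`Γ_∞ = {(1 u; 0 1) : u ∈ ℤ}`, i.e. `N = (1 u; 0 1) M` for some `u ∈ ℤ`.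
The quotient `Quot (rel q)` is the coset space `Γ_∞ \ Γ_0(q)`. -/
def rel (q : ℕ) (M N : Level q) : Prop :=
  ∃ u : ℤ, N.1.1 = !![1, u; 0, 1] * M.1.1

/-- A single term `(cz+d)^{-k} e^{2πi m Mz}` of the Poincaré series. -/
def term (m k : ℕ) (M : SL2Z) (z : ℂ) : ℂ :=
  ((M.1 1 0 : ℂ) * z + (M.1 1 1 : ℂ)) ^ (-(k : ℤ)) *
    Complex.exp (2 * π * Complex.I * (m : ℂ) *
      (((M.1 0 0 : ℂ) * z + (M.1 0 1 : ℂ)) / ((M.1 1 0 : ℂ) * z + (M.1 1 1 : ℂ))))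

/-- The Poincaré series `P_{m,k,q}(z) = Σ_{M ∈ Γ_∞\Γ_0(q)} (cz+d)^{-k} e^{2πi m Mz}`,
summed over coset representatives (the terms do not depend on the representative). -/
def Poincare (m k q : ℕ) (z : ℂ) : ℂ :=
  ∑' c : Quot (rel q), term m k (Quot.out c).1 z

/-- The `N`-th Fourier coefficient `p_{m,k,q}(N) = ∫_0^1 P_{m,k,q}(x+iy) e^{-2πiN(x+iy)} dx`
(for any choice of `y > 0`). -/
def fcoeff (m k q : ℕ) (y : ℝ) (N : ℕ) : ℂ :=
  ∫ x in (0 : ℝ)..(1 : ℝ), Poincare m k q ((x : ℂ) + (y : ℂ) * Complex.I) *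
    Complex.exp (-(2 * π * Complex.I) * (N : ℂ) * ((x : ℂ) + (y : ℂ) * Complex.I))

end EP

namespace EPaux
open EP

lemma Tmul (u : ℤ) (A : Matrix (Fin 2) (Fin 2) ℤ) :
    !![1, u; 0, 1] * A = !![A 0 0 + u * A 1 0, A 0 1 + u * A 1 1; A 1 0, A 1 1] := by
  ext i j
  fin_cases i <;> fin_cases j <;>
    simp [Matrix.mul_apply, Fin.sum_univ_two]

def brow (q : ℕ) : Quot (rel q) → ℤ × ℤ :=
  Quot.lift (fun M => (M.1.1 1 0, M.1.1 1 1)) (by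
    rintro M N ⟨u, hu⟩
    rw [Tmul] at hu
    simp [hu])

lemma brow_out {q : ℕ} (c : Quot (rel q)) :
    brow q c = ((Quot.out c).1.1 1 0, (Quot.out c).1.1 1 1) := by
  conv_lhs => rw [← Quot.out_eq c]
  rfl

lemma eq_T_mul {q : ℕ} (M N : Level q) (h0 : M.1.1 1 0 = N.1.1 1 0)
    (h1 : M.1.1 1 1 = N.1.1 1 1) : rel q M N := by
  refine ⟨M.1.1 0 0 * N.1.1 0 1 - N.1.1 0 0 * M.1.1 0 1, ?_⟩
  have hM : M.1.1.det = 1 := M.1.2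
  have hN : N.1.1.det = 1 := N.1.2
  rw [Matrix.det_fin_two] at hM hN
  rw [← h0, ← h1] at hN
  rw [Tmul]
  ext i j
  fin_cases i <;> fin_cases j <;> simp
  · linear_combination (M.1.1 0 0) * hN - (N.1.1 0 0) * hM
  · linear_combination (M.1.1 0 1) * hN - (N.1.1 0 1) * hM
  · exact h0.symm
  · exact h1.symm

lemma brow_injective (q : ℕ) : Function.Injective (brow q) := by
  intro c₁ c₂ h
  rw [brow_out, brow_out, Prod.mk.injEq] at h
  rw [← Quot.out_eq c₁, ← Quot.out_eq c₂]
  exact Quot.sound (eq_T_mul _ _ h.1 h.2)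

end EPaux
namespace EPaux2
open EP EPaux

def idc (q : ℕ) : Level q := ⟨1, by simp⟩
def negc (q : ℕ) : Level q := ⟨-1, by simp⟩

lemma brow_idc (q : ℕ) : brow q (Quot.mk _ (idc q)) = (0, 1) := by
  simp [brow, idc, Matrix.SpecialLinearGroup.coe_one, Matrix.one_apply]

lemma brow_negc (q : ℕ) : brow q (Quot.mk _ (negc q)) = (0, -1) := by
  simp [brow, negc, Matrix.one_apply]

lemma class_of_c_zero {q : ℕ} (c : Quot (rel q)) (h : (brow q c).1 = 0) :
    c = Quot.mk _ (idc q) ∨ c = Quot.mk _ (negc q) := by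
  have hdet : (Quot.out c).1.1.det = 1 := (Quot.out c).1.2
  rw [Matrix.det_fin_two] at hdet
  simp only [brow_out] at h
  have h11 : (Quot.out c).1.1 1 1 = 1 ∨ (Quot.out c).1.1 1 1 = -1 := by
    have := hdet
    rw [h] at this
    simp at this
    rcases Int.mul_eq_one_iff_eq_one_or_neg_one.1 this with ⟨_, h2⟩ | ⟨_, h2⟩
    · exact Or.inl h2
    · exact Or.inr h2
  rcases h11 with h11 | h11
  · left
    apply brow_injective
    rw [brow_out, brow_idc, h, h11]
  · right
    apply brow_injective
    rw [brow_out, brow_negc, h, h11]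

end EPaux2
namespace EPaux3
open EP Real

lemma term_c_zero (m k : ℕ) (hk : Even k) (M : SL2Z) (hc : M.1 1 0 = 0) (z : ℂ) :
    term m k M z = Complex.exp (2 * π * Complex.I * m * z) := by
  have hdet : M.1.det = 1 := M.2
  rw [Matrix.det_fin_two, hc, mul_zero, sub_zero] at hdet
  rcases Int.mul_eq_one_iff_eq_one_or_neg_one.1 hdet with ⟨ha, hd⟩ | ⟨ha, hd⟩
  · rw [term, hc, ha, hd]
    push_cast
    rw [zero_mul, zero_add, one_zpow, one_mul, one_mul, div_one, mul_add, Complex.exp_add]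
    have : 2 * (π:ℂ) * Complex.I * (m:ℂ) * ((M.1 0 1 : ℤ) : ℂ)
        = ((m * M.1 0 1 : ℤ) : ℂ) * (2 * (π:ℂ) * Complex.I) := by push_cast; ring
    rw [this, Complex.exp_int_mul_two_pi_mul_I, mul_one]
  · rw [term, hc, ha, hd]
    push_cast
    rw [zero_mul, zero_add]
    have h1 : ((-1 : ℂ)) ^ (-(k:ℤ)) = 1 := by
      apply Even.neg_one_zpow
      exact (Int.even_coe_nat k).2 hk |>.neg
    have h2 : ((-1:ℂ) * z + (M.1 0 1 : ℤ)) / (-1) = z - ((M.1 0 1 : ℤ):ℂ) := by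
      field_simp
      ring
    rw [h1, h2, one_mul, mul_sub, Complex.exp_sub]
    have : 2 * (π:ℂ) * Complex.I * (m:ℂ) * ((M.1 0 1 : ℤ) : ℂ)
        = ((m * M.1 0 1 : ℤ) : ℂ) * (2 * (π:ℂ) * Complex.I) := by push_cast; ring
    rw [this, Complex.exp_int_mul_two_pi_mul_I, div_one]
end EPaux3
namespace EPaux4
open EP Real

lemma wz_ne (M : SL2Z) : (M.1 1 0 : ℂ) * (Complex.I * 2) + (M.1 1 1 : ℂ) ≠ 0 := by
  intro h
  have hre := congrArg Complex.re h
  have him := congrArg Complex.im h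
  simp [Complex.add_re, Complex.add_im, Complex.mul_re, Complex.mul_im] at hre him
  have hdet : M.1.det = 1 := M.2
  rw [Matrix.det_fin_two] at hdet
  rw [him, hre] at hdet
  simp at hdet

lemma norm_term_le (m k : ℕ) (M : SL2Z) :
    ‖term m k M (Complex.I * 2)‖ ≤ ‖(M.1 1 0 : ℂ) * (Complex.I * 2) + (M.1 1 1 : ℂ)‖ ^ (-(k:ℤ)) := by
  set w := (M.1 1 0 : ℂ) * (Complex.I * 2) + (M.1 1 1 : ℂ) with hw
  have hwne : w ≠ 0 := wz_ne M
  rw [term, norm_mul, norm_zpow]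
  have hexp : ‖Complex.exp (2 * (π:ℂ) * Complex.I * (m : ℂ) *
      (((M.1 0 0 : ℂ) * (Complex.I * 2) + (M.1 0 1 : ℂ)) / w))‖ ≤ 1 := by
    rw [Complex.norm_exp, Real.exp_le_one_iff]
    set ζ := ((M.1 0 0 : ℂ) * (Complex.I * 2) + (M.1 0 1 : ℂ)) / w with hζ
    have hre : (2 * (π:ℂ) * Complex.I * (m : ℂ) * ζ).re = -(2 * π * m * ζ.im) := by
      simp [Complex.mul_re, Complex.mul_im]
    rw [hre, neg_nonpos]
    have him : 0 ≤ ζ.im := by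
      rw [hζ, Complex.div_im]
      have hdet : M.1.det = 1 := M.2
      rw [Matrix.det_fin_two] at hdet
      have hnsq : (0:ℝ) < Complex.normSq w := by
        rwa [Complex.normSq_pos]
      have : ((M.1 0 0 : ℂ) * (Complex.I * 2) + (M.1 0 1 : ℂ)).im * w.re
          - ((M.1 0 0 : ℂ) * (Complex.I * 2) + (M.1 0 1 : ℂ)).re * w.im
          = 2 * ((M.1 0 0 * M.1 1 1 - M.1 0 1 * M.1 1 0 : ℤ) : ℝ) := by
        simp [hw, Complex.add_re, Complex.add_im, Complex.mul_re, Complex.mul_im]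
        push_cast
        ring
      rw [div_sub_div_same, this, hdet]
      apply div_nonneg (by norm_num) (Complex.normSq_nonneg w)
    positivity
  calc ‖w‖ ^ (-(k:ℤ)) * ‖Complex.exp _‖ ≤ ‖w‖ ^ (-(k:ℤ)) * 1 := by
        apply mul_le_mul_of_nonneg_left hexp
        positivity
    _ = ‖w‖ ^ (-(k:ℤ)) := mul_one _
end EPaux4
namespace EPaux5
open EP EPaux EPaux2 EPaux3 EPaux4 Real EisensteinSeries

def zH : UpperHalfPlane := ⟨Complex.I * 2, by simp⟩

def g (k : ℕ) (p : ℤ × ℤ) : ℝ := ‖eisSummand k ![p.1, p.2] zH‖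

lemma g_eq (k : ℕ) (p : ℤ × ℤ) :
    g k p = ‖(p.1 : ℂ) * (Complex.I * 2) + (p.2 : ℂ)‖ ^ (-(k:ℤ)) := by
  rw [g, eisSummand]
  simp [norm_zpow]
  rfl

lemma g_summable {k : ℕ} (hk : 3 ≤ k) : Summable (g k) := by
  have h := summable_norm_eisSummand (k := (k:ℤ)) (by exact_mod_cast hk) zH
  have := ((finTwoArrowEquiv ℤ).symm.summable_iff
    (f := fun v : Fin 2 → ℤ => ‖eisSummand k v zH‖)).2 h
  apply this.congr
  intro p
  simp [g, finTwoArrowEquiv]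
end EPaux5
namespace EPaux6
open EP EPaux EPaux2 EPaux3 EPaux4 EPaux5 Real

def C3 : ℝ := ∑' p : ℤ × ℤ, g 3 p

lemma C3_nonneg : 0 ≤ C3 := tsum_nonneg fun p => norm_nonneg _

lemma zpow_tail_bound {a : ℝ} (ha : 2 ≤ a) {k : ℕ} (hk : 3 ≤ k) :
    a ^ (-(k:ℤ)) ≤ (2⁻¹:ℝ) ^ (k-3) * a ^ (-(3:ℤ)) := by
  have ha0 : (0:ℝ) < a := lt_of_lt_of_le two_pos ha
  have h1 : a ^ (-(k:ℤ)) = (a⁻¹)^k := by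
    rw [zpow_neg, zpow_natCast, inv_pow]
  have h2 : a ^ (-(3:ℤ)) = (a⁻¹)^3 := by
    rw [show (3:ℤ) = ((3:ℕ):ℤ) from rfl, zpow_neg, zpow_natCast, inv_pow]
  rw [h1, h2]
  have hsplit : (a⁻¹)^k = (a⁻¹)^(k-3) * (a⁻¹)^3 := by
    rw [← pow_add]
    congr 1
    omega
  rw [hsplit, mul_comm ((2⁻¹:ℝ)^(k-3)) _, mul_comm ((a⁻¹)^(k-3)) _]
  apply mul_le_mul_of_nonneg_left _ (by positivity)
  exact pow_le_pow_left₀ (by positivity) (by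
    rw [inv_le_inv₀ ha0 two_pos]; exact ha) _

lemma key (m q k : ℕ) (hk3 : 3 ≤ k) (hke : Even k)
    (hsmall : (2⁻¹:ℝ)^(k-3) * C3 < 2 * Real.exp (-(4*π*m))) :
    Poincare m k q (Complex.I * 2) ≠ 0 := by
  classical
  set F : Quot (rel q) → ℂ := fun c => term m k (Quot.out c).1 (Complex.I * 2) with hFdef
  have hFle : ∀ c, ‖F c‖ ≤ g k (brow q c) := by
    intro c
    rw [g_eq, brow_out]
    exact norm_term_le m k (Quot.out c).1
  have hFnorm : Summable fun c => ‖F c‖ :=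
    Summable.of_nonneg_of_le (fun _ => norm_nonneg _) hFle
      ((g_summable hk3).comp_injective (brow_injective q))
  have hF : Summable F := hFnorm.of_norm
  set A : Quot (rel q) := Quot.mk _ (idc q) with hA
  set B : Quot (rel q) := Quot.mk _ (negc q) with hB
  have hAB : A ≠ B := by
    intro h
    have := congrArg (brow q) h
    rw [brow_idc, brow_negc] at this
    simp at this
  set S : Set (Quot (rel q)) := {A, B} with hS
  have hsplit := Summable.tsum_add_tsum_compl (f := F) (s := S) (hF.subtype S) (hF.subtype Sᶜ)
  have hFA : F A = Complex.exp (2 * π * Complex.I * m * (Complex.I * 2)) := by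
    apply term_c_zero m k hke
    have := brow_out A
    rw [brow_idc] at this
    exact (congrArg Prod.fst this).symm
  have hFB : F B = Complex.exp (2 * π * Complex.I * m * (Complex.I * 2)) := by
    apply term_c_zero m k hke
    have := brow_out B
    rw [brow_negc] at this
    exact (congrArg Prod.fst this).symm
  have hSsum : ∑' x : S, F x = F A + F B := by
    have h1 : S = (↑({A, B} : Finset (Quot (rel q))) : Set (Quot (rel q))) := by simp [hS]
    rw [h1, Finset.tsum_subtype', Finset.sum_pair hAB]
  -- tail bound
  have htail1 : ∀ x : ↥Sᶜ, ‖F x.1‖ ≤ (2⁻¹:ℝ)^(k-3) * g 3 (brow q x.1) := by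
    rintro ⟨x, hx⟩
    have hc0 : (brow q x).1 ≠ 0 := by
      intro h0
      rcases class_of_c_zero x h0 with h | h
      · exact hx (by simp [hS, h, hA, hB])
      · exact hx (by simp [hS, h, hA, hB])
    have h2a : (2:ℝ) ≤ ‖((brow q x).1 : ℂ) * (Complex.I * 2) + ((brow q x).2 : ℂ)‖ := by
      have him : (((brow q x).1 : ℂ) * (Complex.I * 2) + ((brow q x).2 : ℂ)).im
          = 2 * ((brow q x).1 : ℝ) := by
        simp [Complex.add_im, Complex.mul_im]
        ring
      calc (2:ℝ) = 2 * 1 := by norm_num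
        _ ≤ 2 * |((brow q x).1 : ℝ)| := by
            have : (1:ℝ) ≤ |((brow q x).1 : ℝ)| := by
              rw [← Int.cast_abs]
              exact_mod_cast Int.one_le_abs (by exact_mod_cast hc0)
            linarith
        _ = |(((brow q x).1 : ℂ) * (Complex.I * 2) + ((brow q x).2 : ℂ)).im| := by
            rw [him, abs_mul]; norm_num
        _ ≤ ‖((brow q x).1 : ℂ) * (Complex.I * 2) + ((brow q x).2 : ℂ)‖ :=
            Complex.abs_im_le_norm _
    calc ‖F x‖ ≤ g k (brow q x) := hFle x
      _ = ‖((brow q x).1 : ℂ) * (Complex.I * 2) + ((brow q x).2 : ℂ)‖ ^ (-(k:ℤ)) := g_eq k _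
      _ ≤ (2⁻¹:ℝ)^(k-3) * ‖((brow q x).1 : ℂ) * (Complex.I * 2) + ((brow q x).2 : ℂ)‖ ^ (-(3:ℤ)) :=
          zpow_tail_bound h2a hk3
      _ = (2⁻¹:ℝ)^(k-3) * g 3 (brow q x) := by rw [g_eq]; norm_num
  have hg3' : Summable fun p : ℤ × ℤ => (2⁻¹:ℝ)^(k-3) * g 3 p :=
    (g_summable le_rfl).mul_left _
  have htail : ‖∑' x : ↥Sᶜ, F x.1‖ ≤ (2⁻¹:ℝ)^(k-3) * C3 := by
    calc ‖∑' x : ↥Sᶜ, F x.1‖ ≤ ∑' x : ↥Sᶜ, ‖F x.1‖ :=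
          norm_tsum_le_tsum_norm (hFnorm.subtype _)
      _ ≤ ∑' p : ℤ × ℤ, (2⁻¹:ℝ)^(k-3) * g 3 p := by
          apply Summable.tsum_le_tsum_of_inj (fun x : ↥Sᶜ => brow q x.1)
            ((brow_injective q).comp Subtype.coe_injective)
            (fun p _ => mul_nonneg (by positivity) (norm_nonneg _)) htail1 (hFnorm.subtype _) hg3'
      _ = (2⁻¹:ℝ)^(k-3) * C3 := by rw [tsum_mul_left]; rfl
  have hmain : ‖F A + F B‖ = 2 * Real.exp (-(4*π*m)) := by
    have hre : (2 * (π:ℂ) * Complex.I * (m:ℂ) * (Complex.I * 2)).re = -(4*π*m) := by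
      simp [Complex.mul_re, Complex.mul_im]
      ring_nf
    rw [hFA, hFB, ← two_mul, norm_mul,
      Complex.norm_exp, hre, Complex.norm_two]
  intro hP
  have hPeq : Poincare m k q (Complex.I * 2) = (∑' x : S, F x.1) + ∑' x : ↥Sᶜ, F x.1 := by
    rw [Poincare, hsplit]
  rw [hPeq, hSsum] at hP
  have : F A + F B = -(∑' x : ↥Sᶜ, F x.1) := by linear_combination hP
  have hcontra : ‖F A + F B‖ ≤ (2⁻¹:ℝ)^(k-3) * C3 := by
    rw [this, norm_neg]
    exact htail
  rw [hmain] at hcontra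
  linarith
end EPaux6


/-- Gaigalas-type result: for any positive integers `m` and `q` there
are infinitely many even integers `k` for which the Poincaré series `P_{m,k,q}` is not
identically zero on `ℍ`. -/
theorem statement18 (m q : ℕ) (hm : 0 < m) (hq : 0 < q) :
    {k : ℕ | Even k ∧ ∃ z : ℂ, 0 < z.im ∧ EP.Poincare m k q z ≠ 0}.Infinite := by
  have hε0 : (0:ℝ) < 2 * Real.exp (-(4*Real.pi*m)) := by positivity
  have htend : Filter.Tendsto (fun k : ℕ => (2⁻¹:ℝ)^(k-3) * EPaux6.C3) Filter.atTop (nhds 0) := by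
    have h1 : Filter.Tendsto (fun n : ℕ => (2⁻¹:ℝ)^n) Filter.atTop (nhds 0) :=
      tendsto_pow_atTop_nhds_zero_of_lt_one (by norm_num) (by norm_num)
    have h2 : Filter.Tendsto (fun k : ℕ => k - 3) Filter.atTop Filter.atTop :=
      Filter.tendsto_sub_atTop_nat 3
    have := (h1.comp h2).mul_const EPaux6.C3
    simpa using this
  have hev := htend.eventually_lt_const hε0
  obtain ⟨K, hK⟩ := Filter.eventually_atTop.1 hev
  apply Set.infinite_of_injective_forall_mem (f := fun n : ℕ => 2*(n + K + 3))
    (hi := fun a b h => by simp only at h; omega)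
  intro n
  refine ⟨⟨n + K + 3, by ring⟩, Complex.I * 2, by simp, ?_⟩
  exact EPaux6.key m q _ (by omega) ⟨n + K + 3, by ring⟩ (hK _ (by omega))
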